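/- Every element β of B₃ (in its band presentation) can be written in the form β = δ^q · T, where q is an integer and T is either the empty word or a positive word in increasing form, i.e. T = a_τ^{s₁} a_{τ+1}^{s₂} ⋯ a_{τ+t−1}^{s_t} for some t ≥ 1, starting subscript τ modulo 3, and exponents s₁, …, s_t ≥ 1, with consecutive syllable subscripts increasing by 1 modulo 3. -/

import Mathlib

/-- The band relations `a₂a₁ = a₃a₂ = a₁a₃`, with subscripts taken modulo 3
(the generator `a₃` is indexed by `0 : ZMod 3`). -/
def bandRels : Set (FreeGroup (ZMod 3)) :=
  { FreeGroup.of 2 * FreeGroup.of 1 * (FreeGroup.of 0 * FreeGroup.of 2)⁻¹,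
    FreeGroup.of 0 * FreeGroup.of 2 * (FreeGroup.of 1 * FreeGroup.of 0)⁻¹ }

/-- The band-presented group `⟨a₁, a₂, a₃ | a₂a₁ = a₃a₂ = a₁a₃⟩` (a model of `B₃`). -/
abbrev BandB3 := PresentedGroup bandRels

/-- The band generators `a i`, indexed by `ZMod 3` (so `a 0 = a₃`). -/
def a (i : ZMod 3) : BandB3 := PresentedGroup.of i

/-- The fundamental element `δ = a₂a₁ (= a₃a₂ = a₁a₃)`. -/
def δ : BandB3 := a 2 * a 1

/-- The positive word in increasing form with initial subscript `τ` and exponent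
sequence `s = (s₁, …, s_t)`, namely `a_τ^{s₁} a_{τ+1}^{s₂} ⋯ a_{τ+t−1}^{s_t}`,
with consecutive syllable subscripts increasing by 1 modulo 3.  When `s = []`
this is the empty word `1`. -/
def tailProd (τ : ZMod 3) (s : List ℕ) : BandB3 :=
  ((List.range s.length).map (fun i : ℕ => a (τ + (i : ZMod 3)) ^ s.getD i 0)).prod

namespace BandAux

lemma mk_rel_one {r : FreeGroup (ZMod 3)} (hr : r ∈ bandRels) :
    PresentedGroup.mk bandRels r = 1 :=
  (QuotientGroup.eq_one_iff r).mpr (Subgroup.subset_normalClosure hr)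

lemma rel1 : a 2 * a 1 = a 0 * a 2 := by
  have h := mk_rel_one (Set.mem_insert _ _)
  rw [map_mul, map_mul, map_inv, map_mul, mul_inv_eq_one] at h
  exact h

lemma rel2 : a 0 * a 2 = a 1 * a 0 := by
  have h := mk_rel_one (Set.mem_insert_of_mem _ rfl)
  rw [map_mul, map_mul, map_inv, map_mul, mul_inv_eq_one] at h
  exact h

lemma rel (i : ZMod 3) : a (i + 1) * a i = δ := by
  have h3 : i = 0 ∨ i = 1 ∨ i = 2 := by revert i; decide
  rcases h3 with rfl | rfl | rfl
  · show a 1 * a 0 = δ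
    rw [δ, rel1, rel2]
  · rfl
  · show a (2 + 1) * a 2 = δ
    have : (2 + 1 : ZMod 3) = 0 := by decide
    rw [this, δ, rel1]

lemma delta_comm (j : ZMod 3) : a j * δ = δ * a (j + 1) := by
  have h1 : a (j + 2) * a (j + 1) = δ := by
    have : j + 1 + 1 = j + 2 := by ring
    rw [← this]; exact rel (j + 1)
  have h2 : a j * a (j + 2) = δ := by
    have hr := rel (j + 2)
    have hk : j + 2 + 1 = j := by
      have h30 : (3 : ZMod 3) = 0 := by decide
      linear_combination h30
    rwa [hk] at hr
  calc a j * δ = a j * (a (j + 2) * a (j + 1)) := by rw [h1]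
    _ = (a j * a (j + 2)) * a (j + 1) := by rw [mul_assoc]
    _ = δ * a (j + 1) := by rw [h2]

lemma delta_comm_inv (j : ZMod 3) : a j * δ⁻¹ = δ⁻¹ * a (j - 1) := by
  have h : a (j - 1) * δ = δ * a j := by
    have h0 := delta_comm (j - 1)
    rwa [show j - 1 + 1 = j by ring] at h0
  calc a j * δ⁻¹ = δ⁻¹ * (δ * a j) * δ⁻¹ := by group
    _ = δ⁻¹ * (a (j - 1) * δ) * δ⁻¹ := by rw [h]
    _ = δ⁻¹ * a (j - 1) := by group

lemma a_zpow (q : ℤ) (j : ZMod 3) : a j * δ ^ q = δ ^ q * a (j + (q : ZMod 3)) := by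
  induction q using Int.induction_on with
  | zero => simp
  | succ k ih =>
      rw [zpow_add_one, ← mul_assoc, ih, mul_assoc, delta_comm, ← mul_assoc,
        ← zpow_add_one]
      congr 1
      push_cast
      ring
  | pred k ih =>
      rw [zpow_sub_one, ← mul_assoc, ih, mul_assoc, delta_comm_inv, ← mul_assoc,
        ← zpow_sub_one]
      congr 1
      push_cast
      ring

lemma tailProd_nil (τ : ZMod 3) : tailProd τ [] = 1 := by simp [tailProd]

lemma tailProd_cons (τ : ZMod 3) (x : ℕ) (s : List ℕ) :
    tailProd τ (x :: s) = a τ ^ x * tailProd (τ + 1) s := by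
  simp only [tailProd, List.length_cons, List.range_succ_eq_map, List.map_cons,
    List.map_map, List.prod_cons]
  congr 1
  · simp
  · refine congrArg List.prod (List.map_congr_left fun i _ => ?_)
    simp only [Function.comp_apply, List.getD_cons_succ]
    congr 2
    push_cast
    ring

lemma tail_left (τ j : ZMod 3) (s : List ℕ) (hs : ∀ x ∈ s, 1 ≤ x) :
    ∃ (e : ℤ) (τ' : ZMod 3) (s' : List ℕ), (∀ x ∈ s', 1 ≤ x) ∧
      a j * tailProd τ s = δ ^ e * tailProd τ' s' := by
  cases s with
  | nil =>
      refine ⟨0, j, [1], by simp, ?_⟩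
      simp [tailProd_nil, tailProd_cons]
  | cons x rest =>
      have hx : 1 ≤ x := hs x (List.mem_cons_self)
      have hrest : ∀ y ∈ rest, 1 ≤ y := fun y hy => hs y (List.mem_cons_of_mem _ hy)
      have h3 : j - τ = 0 ∨ j - τ = 1 ∨ j - τ = 2 := by
        revert j τ; decide
      rcases h3 with h | h | h
      · -- j = τ : absorb into the first power
        have hj : j = τ := by linear_combination h
        subst hj
        refine ⟨0, j, (x + 1) :: rest, ?_, ?_⟩
        · intro y hy
          rcases List.mem_cons.mp hy with rfl | hy
          · omega
          · exact hrest y hy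
        · rw [tailProd_cons, tailProd_cons, zpow_zero, one_mul, pow_succ',
            mul_assoc]
      · -- j = τ + 1 : cancellation producing δ
        have hj : j = τ + 1 := by linear_combination h
        subst hj
        obtain ⟨n, rfl⟩ : ∃ n, x = n + 1 := ⟨x - 1, by omega⟩
        cases n with
        | zero =>
            refine ⟨1, τ + 1, rest, hrest, ?_⟩
            rw [tailProd_cons, pow_one, ← mul_assoc, rel, zpow_one]
        | succ m =>
            refine ⟨1, τ, (m + 1) :: rest, ?_, ?_⟩
            · intro y hy
              rcases List.mem_cons.mp hy with rfl | hy
              · omega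
              · exact hrest y hy
            · rw [tailProd_cons, tailProd_cons, pow_succ', ← mul_assoc,
                ← mul_assoc, rel, zpow_one, mul_assoc]
      · -- j = τ - 1 : prepend a new syllable
        have hj : τ = j + 1 := by
          have h30 : (3 : ZMod 3) = 0 := by decide
          linear_combination -h - h30
        refine ⟨0, j, 1 :: x :: rest, ?_, ?_⟩
        · intro y hy
          rcases List.mem_cons.mp hy with rfl | hy
          · omega
          · exact hs y hy
        · rw [zpow_zero, one_mul, tailProd_cons j 1 (x :: rest), pow_one, ← hj]

/-- The normal-form predicate. -/
def P (β : BandB3) : Prop :=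
  ∃ (q : ℤ) (τ : ZMod 3) (s : List ℕ),
    (∀ x ∈ s, 1 ≤ x) ∧ β = δ ^ q * tailProd τ s

lemma P_mul_a (i : ZMod 3) {β : BandB3} (h : P β) : P (a i * β) := by
  obtain ⟨q, τ, s, hs, rfl⟩ := h
  obtain ⟨e, τ', s', hs', he⟩ := tail_left τ (i + (q : ZMod 3)) s hs
  refine ⟨q + e, τ', s', hs', ?_⟩
  rw [← mul_assoc, a_zpow, mul_assoc, he, ← mul_assoc, ← zpow_add]

lemma a_inv (i : ZMod 3) : (a i)⁻¹ = δ⁻¹ * a (i + 1) := by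
  rw [← rel i, mul_inv_rev, mul_assoc, inv_mul_cancel, mul_one]

lemma P_mul_a_inv (i : ZMod 3) {β : BandB3} (h : P β) : P ((a i)⁻¹ * β) := by
  obtain ⟨q, τ, s, hs, he⟩ := P_mul_a (i + 1) h
  refine ⟨q - 1, τ, s, hs, ?_⟩
  rw [a_inv, mul_assoc, he, ← mul_assoc]
  congr 1
  group

lemma P_word (l : List (ZMod 3 × Bool)) :
    P (PresentedGroup.mk bandRels (FreeGroup.mk l)) := by
  induction l with
  | nil =>
      refine ⟨0, 0, [], by simp, ?_⟩
      rw [← FreeGroup.one_eq_mk, map_one]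
      simp [tailProd_nil]
  | cons x l ih =>
      obtain ⟨i, b⟩ := x
      have hmk : FreeGroup.mk ((i, b) :: l) =
          FreeGroup.mk [(i, b)] * FreeGroup.mk l := by
        rw [FreeGroup.mul_mk]; rfl
      cases b
      · have h1 : FreeGroup.mk [(i, false)] = (FreeGroup.of i)⁻¹ := by
          rw [show (FreeGroup.of i : FreeGroup (ZMod 3)) = FreeGroup.mk [(i, true)] from rfl,
            FreeGroup.inv_mk]
          simp [FreeGroup.invRev]
        rw [hmk, h1, map_mul, map_inv]
        exact P_mul_a_inv i ih
      · have h1 : FreeGroup.mk [(i, true)] = FreeGroup.of i := rfl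
        rw [hmk, h1, map_mul]
        exact P_mul_a i ih

end BandAux

/-- Every element `β` of `B₃` can be written as `β = δ^q · T` where `q ∈ ℤ` and `T` is
either the empty word (`s = []`) or a positive word in increasing form
`a_τ^{s₁} a_{τ+1}^{s₂} ⋯ a_{τ+t−1}^{s_t}` with all exponents `sᵢ ≥ 1`. -/
theorem exists_power_tail_form (β : BandB3) :
    ∃ (q : ℤ) (τ : ZMod 3) (s : List ℕ),
      (∀ x ∈ s, 1 ≤ x) ∧ β = δ ^ q * tailProd τ s := by
  obtain ⟨w, rfl⟩ := PresentedGroup.mk_surjective bandRels β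
  have := BandAux.P_word w.toWord
  rwa [FreeGroup.mk_toWord] at this
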